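/- Fix 0 < p1, p2 < 1 with q_k = 1 - p_k, and δ > 0. Among all positive reals n1, n2 satisfying p1 q1/n1 + p2 q2/n2 = δ, the expected number of failures q1 n1 + q2 n2 is minimized when n1/(n1+n2) = √p1/(√p1 + √p2) (the RSIHR allocation). -/

import Mathlib

/-- Among all positive reals `n1, n2` with
`p1 q1/n1 + p2 q2/n2 = δ` (binary responses with success probabilities
`p1, p2`, `q_k = 1 - p_k`), the expected number of failures
`q1 n1 + q2 n2` is minimized at the RSIHR allocation
`n1/(n1+n2) = √p1/(√p1 + √p2)`. -/
theorem stmt2 (p1 p2 δ : ℝ) (hp1 : 0 < p1) (hp1' : p1 < 1) (hp2 : 0 < p2) (hp2' : p2 < 1)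
    (hδ : 0 < δ) (q1 q2 : ℝ) (hq1 : q1 = 1 - p1) (hq2 : q2 = 1 - p2)
    (m1 m2 : ℝ) (hm1 : 0 < m1) (hm2 : 0 < m2)
    (hmc : p1 * q1 / m1 + p2 * q2 / m2 = δ)
    (hmopt : m1 / (m1 + m2) = Real.sqrt p1 / (Real.sqrt p1 + Real.sqrt p2)) :
    ∀ n1 n2 : ℝ, 0 < n1 → 0 < n2 → p1 * q1 / n1 + p2 * q2 / n2 = δ →
      q1 * m1 + q2 * m2 ≤ q1 * n1 + q2 * n2 := by
  intro n1 n2 hn1 hn2 hnc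
  set s1 := Real.sqrt p1 with hs1def
  set s2 := Real.sqrt p2 with hs2def
  have hs1 : 0 < s1 := Real.sqrt_pos.2 hp1
  have hs2 : 0 < s2 := Real.sqrt_pos.2 hp2
  have hs1sq : s1 ^ 2 = p1 := Real.sq_sqrt hp1.le
  have hs2sq : s2 ^ 2 = p2 := Real.sq_sqrt hp2.le
  have hq1pos : 0 < q1 := by rw [hq1]; linarith
  have hq2pos : 0 < q2 := by rw [hq2]; linarith
  -- From optimality condition: m1 * s2 = s1 * m2
  have hratio : m1 * s2 = s1 * m2 := by
    rw [div_eq_div_iff (by linarith) (by linarith)] at hmopt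
    nlinarith [hmopt]
  -- set t so that m1 = s1 * t, m2 = s2 * t
  set t := m1 / s1 with htdef
  have ht : 0 < t := div_pos hm1 hs1
  have hm1t : m1 = s1 * t := by rw [htdef]; field_simp
  have hm2t : m2 = s2 * t := by
    have : s1 * m2 = s1 * (s2 * t) := by
      rw [← hratio, hm1t]; ring
    exact (mul_left_cancel₀ hs1.ne' this)
  -- constraint at m gives q1*s1 + q2*s2 = δ * t
  have hδt : q1 * s1 + q2 * s2 = δ * t := by
    rw [hm1t, hm2t] at hmc
    field_simp at hmc
    have h2 : (s1 * s2 * t) * (q1 * s1 + q2 * s2) = (s1 * s2 * t) * (δ * t) := by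
      linear_combination t * hmc + (q1 * s2 * t) * hs1sq + (q2 * s1 * t) * hs2sq
    exact mul_left_cancel₀ (by positivity) h2
  -- Cauchy-Schwarz at n
  have hkey : (q1 * s1 + q2 * s2) ^ 2 ≤ (q1 * n1 + q2 * n2) * δ := by
    rw [← hnc, div_add_div _ _ hn1.ne' hn2.ne', ← mul_div_assoc,
      le_div_iff₀ (by positivity)]
    rw [← hs1sq, ← hs2sq]
    nlinarith [mul_nonneg (mul_pos hq1pos hq2pos).le (sq_nonneg (s2 * n1 - s1 * n2)), hs1sq, hs2sq]
  -- value at m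
  have hval : q1 * m1 + q2 * m2 = (q1 * s1 + q2 * s2) * t := by
    rw [hm1t, hm2t]; ring
  have : (q1 * m1 + q2 * m2) * δ ≤ (q1 * n1 + q2 * n2) * δ := by
    calc (q1 * m1 + q2 * m2) * δ = (q1 * s1 + q2 * s2) * (δ * t) := by rw [hval]; ring
      _ = (q1 * s1 + q2 * s2) ^ 2 := by rw [← hδt]; ring
      _ ≤ (q1 * n1 + q2 * n2) * δ := hkey
  exact le_of_mul_le_mul_right this hδ
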